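/- Let θ > 0 and f : ℝ → ℝ be C¹ on [0,θ] with f'(x) < 0 on [0,θ] and f(0) > 0 > f(θ); let x̄ ∈ (0,θ) be the unique zero of f and set Q_c := −f(θ). Fix a ∈ (0,1) and an integer n ≥ 1. Let T₁ < T₂ and suppose A : (T₁,T₂) → ℝ and ξ : (T₁,T₂) → ℝ are differentiable with A(T) > Q_c and ξ(T) ∈ (x̄, θ) for all T, and satisfying for every T ∈ (T₁,T₂): (i) ∫_{ξ(T)}^θ dx/(f(x)+A(T)) + n·∫₀^θ dx/(f(x)+A(T)) = a·T, and (ii) ∫_{ξ(T)}^θ dx/(−f(x)) = (1−a)·T. Then A'(T) < 0 for every T ∈ (T₁,T₂). -/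

import Mathlib

open Set intervalIntegral Filter Topology MeasureTheory

set_option maxHeartbeats 4000000

/-- Lemma 3 (left border collisions): if A(T), ξ(T) are differentiable on (T₁,T₂) and
satisfy the left border-collision system
∫_{ξ(T)}^θ dx/(f(x)+A(T)) + n·∫₀^θ dx/(f(x)+A(T)) = a·T and
∫_{ξ(T)}^θ dx/(-f(x)) = (1-a)·T,
then A is strictly decreasing: A'(T) < 0 on (T₁,T₂). -/
theorem left_bifurcation_curve_decreasing (θ a T₁ T₂ : ℝ) (f f' : ℝ → ℝ) (xbar : ℝ)
    (n : ℕ) (A ξ : ℝ → ℝ)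
    (hθ : 0 < θ)
    (hderiv : ∀ x ∈ Set.Icc 0 θ, HasDerivAt f (f' x) x)
    (hf'_cont : ContinuousOn f' (Set.Icc 0 θ))
    (hf'_neg : ∀ x ∈ Set.Icc 0 θ, f' x < 0)
    (hf0 : 0 < f 0) (hfθ : f θ < 0)
    (hxbar : xbar ∈ Set.Ioo 0 θ) (hfxbar : f xbar = 0)
    (ha : a ∈ Set.Ioo (0:ℝ) 1) (hn : 1 ≤ n)
    (hT : T₁ < T₂)
    (hA_diff : ∀ T ∈ Set.Ioo T₁ T₂, DifferentiableAt ℝ A T)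
    (hξ_diff : ∀ T ∈ Set.Ioo T₁ T₂, DifferentiableAt ℝ ξ T)
    (hA_gt : ∀ T ∈ Set.Ioo T₁ T₂, -f θ < A T)
    (hξ_mem : ∀ T ∈ Set.Ioo T₁ T₂, ξ T ∈ Set.Ioo xbar θ)
    (heq1 : ∀ T ∈ Set.Ioo T₁ T₂,
      (∫ x in (ξ T)..θ, 1 / (f x + A T))
        + (n : ℝ) * (∫ x in (0:ℝ)..θ, 1 / (f x + A T)) = a * T)
    (heq2 : ∀ T ∈ Set.Ioo T₁ T₂,
      (∫ x in (ξ T)..θ, 1 / (-f x)) = (1 - a) * T) :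
    ∀ T ∈ Set.Ioo T₁ T₂, deriv A T < 0 := by
  -- basic facts about f
  have hfc : ContinuousOn f (Icc 0 θ) := fun x hx =>
    (hderiv x hx).continuousAt.continuousWithinAt
  have hanti : StrictAntiOn f (Icc 0 θ) := by
    apply strictAntiOn_of_deriv_neg (convex_Icc 0 θ) hfc
    intro x hx
    rw [interior_Icc] at hx
    rw [(hderiv x (Ioo_subset_Icc_self hx)).deriv]
    exact hf'_neg x (Ioo_subset_Icc_self hx)
  have hmono : AntitoneOn f (Icc 0 θ) := hanti.antitoneOn
  have hxbarI : xbar ∈ Icc 0 θ := Ioo_subset_Icc_self hxbar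
  have hθI : θ ∈ Icc 0 θ := right_mem_Icc.mpr hθ.le
  -- f is negative to the right of xbar
  have hfneg : ∀ x ∈ Icc 0 θ, xbar < x → f x < 0 := by
    intro x hx hxx
    have := hanti hxbarI hx hxx
    linarith [hfxbar]
  -- f ≥ f θ on [0,θ]
  have hfθ_le : ∀ x ∈ Icc 0 θ, f θ ≤ f x := fun x hx => hmono hx hθI hx.2
  intro T hTm
  have hξT := hξ_mem T hTm
  set A₀ := A T with hA₀def
  set s₀ := ξ T with hs₀def
  have hs₀I : s₀ ∈ Icc 0 θ := ⟨(hxbar.1.trans hξT.1).le, hξT.2.le⟩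
  have hfs₀ : f s₀ < 0 := hfneg s₀ hs₀I hξT.1
  set u : ℝ := -f s₀ with hudef
  have hu : 0 < u := by simp only [hudef]; linarith
  have hQA : -f θ < A₀ := hA_gt T hTm
  have huA : u < A₀ := by
    have := hanti hs₀I hθI hξT.2
    simp only [hudef]; linarith
  have hAmu : 0 < A₀ - u := by linarith
  -- positivity of f + A₀ on [0,θ]
  have hposA₀ : ∀ x ∈ Icc 0 θ, 0 < f x + A₀ := fun x hx => by
    have := hfθ_le x hx; linarith
  -- the integrands as functions
  set g : ℝ → ℝ := fun x => 1 / (f x + A₀) with hgdef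
  have hgc : ContinuousOn g (Icc 0 θ) :=
    continuousOn_const.div (hfc.add continuousOn_const) (fun x hx => (hposA₀ x hx).ne')
  have hg_int : ∀ p q : ℝ, p ∈ Icc 0 θ → q ∈ Icc 0 θ →
      IntervalIntegrable g volume p q := by
    intro p q hp hq
    exact (hgc.mono (uIcc_subset_Icc hp hq)).intervalIntegrable
  -- integrability of 1/(-f) between points of (xbar, θ]
  have hnegf_int : ∀ p q : ℝ, p ∈ Icc 0 θ → q ∈ Icc 0 θ → xbar < p → xbar < q →
      IntervalIntegrable (fun x => 1 / (-f x)) volume p q := by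
    intro p q hp hq hxp hxq
    apply ContinuousOn.intervalIntegrable
    apply ContinuousOn.div continuousOn_const ((hfc.mono (uIcc_subset_Icc hp hq)).neg)
    intro x hx
    have hx' : x ∈ Icc 0 θ := uIcc_subset_Icc hp hq hx
    have hminx : min p q ≤ x := hx.1
    have : f x < 0 := hfneg x hx' (lt_of_lt_of_le (lt_min hxp hxq) hminx)
    simp only [ne_eq, Pi.neg_apply, neg_eq_zero]; linarith
  have ha0 : 0 < a := ha.1
  have ha1 : a < 1 := ha.2
  have hs₀θ : s₀ < θ := hξT.2
  -- pointwise facts on [s₀, θ]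
  have hf_on : ∀ x ∈ Icc s₀ θ, f x ≤ f s₀ := by
    intro x hx
    exact hmono hs₀I ⟨hs₀I.1.trans hx.1, hx.2⟩ hx.1
  -- T is positive
  have heq2T := heq2 T hTm
  have hTpos : 0 < T := by
    have hpos : 0 < ∫ x in s₀..θ, 1 / (-f x) := by
      apply intervalIntegral_pos_of_pos_on
        (hnegf_int s₀ θ hs₀I hθI hξT.1 hxbar.2) _ hs₀θ
      intro x hx
      have hfx : (0:ℝ) < -f x := by
        have := hfneg x ⟨hs₀I.1.trans hx.1.le, hx.2.le⟩ (hξT.1.trans hx.1); linarith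
      positivity
    rw [heq2T] at hpos
    nlinarith
  -- (1-a) T ≤ (θ - s₀)/u
  have hI2 : (1 - a) * T ≤ (θ - s₀) * (1 / u) := by
    rw [← heq2T]
    have := intervalIntegral.integral_mono_on (μ := volume) hs₀θ.le
      (hnegf_int s₀ θ hs₀I hθI hξT.1 hxbar.2) intervalIntegrable_const
      (f := fun x => 1 / (-f x)) (g := fun _ => 1 / u) ?_
    · simpa using this
    · intro x hx
      have hfx : f x < 0 := hfneg x ⟨hs₀I.1.trans hx.1, hx.2⟩
        (lt_of_lt_of_le hξT.1 hx.1)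
      have : u ≤ -f x := by
        have := hf_on x hx; simp only [hudef]; linarith
      exact one_div_le_one_div_of_le hu this
  -- (θ - s₀)/(A₀ - u) ≤ ∫_{s₀}^θ g
  have hI1 : (θ - s₀) * (1 / (A₀ - u)) ≤ ∫ x in s₀..θ, g x := by
    have := intervalIntegral.integral_mono_on (μ := volume) hs₀θ.le
      intervalIntegrable_const (hg_int s₀ θ hs₀I hθI)
      (f := fun _ => 1 / (A₀ - u)) (g := g) ?_
    · simpa using this
    · intro x hx
      have hx' : x ∈ Icc 0 θ := ⟨hs₀I.1.trans hx.1, hx.2⟩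
      have h1 : f x + A₀ ≤ A₀ - u := by
        have := hf_on x hx; simp only [hudef]; linarith
      exact one_div_le_one_div_of_le (hposA₀ x hx') h1
  -- ∫_{s₀}^θ g ≤ ∫_0^θ g
  have hI0 : (∫ x in s₀..θ, g x) ≤ ∫ x in (0:ℝ)..θ, g x := by
    have hadd : (∫ x in (0:ℝ)..s₀, g x) + (∫ x in s₀..θ, g x) = ∫ x in (0:ℝ)..θ, g x :=
      intervalIntegral.integral_add_adjacent_intervals
        (hg_int 0 s₀ (left_mem_Icc.mpr hθ.le) hs₀I) (hg_int s₀ θ hs₀I hθI)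
    have hnn : 0 ≤ ∫ x in (0:ℝ)..s₀, g x := by
      apply intervalIntegral.integral_nonneg hs₀I.1
      intro x hx
      have hx' : x ∈ Icc 0 θ := ⟨hx.1, hx.2.trans hs₀I.2⟩
      exact le_of_lt (by have := hposA₀ x hx'; positivity)
    linarith
  -- key inequality : u < a * A₀
  have heq1T := heq1 T hTm
  have hInn : 0 ≤ ∫ x in s₀..θ, g x := le_trans
    (by
      have h1 : (0:ℝ) ≤ θ - s₀ := by linarith
      have h2 : (0:ℝ) ≤ 1 / (A₀ - u) := by positivity
      positivity) hI1
  have hn1 : (1:ℝ) ≤ (n:ℝ) := by exact_mod_cast hn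
  have hkey : u < a * A₀ := by
    have h2 : 2 * ((θ - s₀) * (1 / (A₀ - u))) ≤ a * T := by
      rw [← heq1T]
      have hng : (∫ x in s₀..θ, g x) ≤ (n:ℝ) * ∫ x in (0:ℝ)..θ, g x := by
        calc (∫ x in s₀..θ, g x) ≤ (∫ x in (0:ℝ)..θ, g x) := hI0
        _ ≤ (n:ℝ) * ∫ x in (0:ℝ)..θ, g x := le_mul_of_one_le_left (hInn.trans hI0) hn1
      have hgi : (∫ x in s₀..θ, g x) + (n:ℝ) * (∫ x in (0:ℝ)..θ, g x)
          = (∫ x in s₀..θ, (fun x => 1 / (f x + A₀)) x)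
            + (n:ℝ) * (∫ x in (0:ℝ)..θ, (fun x => 1 / (f x + A₀)) x) := rfl
      nlinarith [hI1]
    have hθs : 0 < θ - s₀ := by linarith
    -- a*T*(A₀-u) ≥ 2(θ-s₀) and (1-a)*T*u ≤ (θ-s₀)
    have e1 : 2 * (θ - s₀) ≤ a * T * (A₀ - u) := by
      have := mul_le_mul_of_nonneg_right h2 hAmu.le
      calc 2 * (θ - s₀) = 2 * ((θ - s₀) * (1 / (A₀ - u))) * (A₀ - u) := by
            field_simp
      _ ≤ a * T * (A₀ - u) := this
    have e2 : (1 - a) * T * u ≤ θ - s₀ := by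
      have := mul_le_mul_of_nonneg_right hI2 hu.le
      calc (1 - a) * T * u ≤ (θ - s₀) * (1 / u) * u := this
      _ = θ - s₀ := by field_simp
    have e4 : 0 ≤ T * (a * A₀ + a * u - 2 * u) := by nlinarith [e1, e2]
    have e5 : 0 ≤ a * A₀ + a * u - 2 * u := (mul_nonneg_iff_of_pos_left hTpos).mp e4
    nlinarith [mul_pos hu (show (0:ℝ) < 1 - a by linarith)]
  -- constants
  set ε₀ : ℝ := (f θ + A₀) / 2 with hε₀def
  have hε₀ : 0 < ε₀ := by simp only [hε₀def]; linarith
  set c : ℝ := (a * A₀ - u) / (A₀ - u) with hcdef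
  have hc : 0 < c := div_pos (by linarith) hAmu
  set C : ℝ := ((n:ℝ) + 1) * θ / ε₀ ^ 2 with hCdef
  have hC : 0 < C := by positivity
  -- eventually, the slope of A is at most -(c/C)
  have hev : ∀ᶠ T' in 𝓝[>] T, slope A T T' ≤ -(c / C) := by
    have h1 : Ioo T T₂ ∈ 𝓝[>] T := Ioo_mem_nhdsGT_of_mem ⟨le_refl T, hTm.2⟩
    have h2 : ∀ᶠ T' in 𝓝[>] T, |A T' - A₀| < ε₀ := by
      have hco : ContinuousAt A T := (hA_diff T hTm).continuousAt
      have h2' : ∀ᶠ T' in 𝓝 T, |A T' - A₀| < ε₀ := by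
        have := hco (Metric.ball_mem_nhds (A T) hε₀)
        filter_upwards [this] with x hx
        simpa [Real.dist_eq, hA₀def] using hx
      exact h2'.filter_mono nhdsWithin_le_nhds
    rw [Filter.eventually_iff_exists_mem]
    refine ⟨Ioo T T₂ ∩ {T' | |A T' - A₀| < ε₀}, inter_mem h1 h2, ?_⟩
    rintro T' ⟨hT', hAT'⟩
    simp only [mem_setOf_eq] at hAT'
    have hT'm : T' ∈ Ioo T₁ T₂ := ⟨hTm.1.trans hT'.1, hT'.2⟩
    have hΔ : 0 < T' - T := by have := hT'.1; linarith
    have hA'lo : A₀ - ε₀ < A T' := by have := abs_lt.mp hAT'; linarith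
    set s₁ := ξ T' with hs₁def
    have hs₁m : s₁ ∈ Ioo xbar θ := hξ_mem T' hT'm
    have hs₁I : s₁ ∈ Icc 0 θ := ⟨(hxbar.1.trans hs₁m.1).le, hs₁m.2.le⟩
    -- the ξ-increment equation from heq2
    have hadd2 : (∫ x in s₁..s₀, 1 / (-f x)) + (∫ x in s₀..θ, 1 / (-f x))
        = ∫ x in s₁..θ, 1 / (-f x) :=
      intervalIntegral.integral_add_adjacent_intervals
        (hnegf_int s₁ s₀ hs₁I hs₀I hs₁m.1 hξT.1) (hnegf_int s₀ θ hs₀I hθI hξT.1 hxbar.2)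
    have hI2' : (∫ x in s₁..s₀, 1 / (-f x)) = (1 - a) * (T' - T) := by
      rw [heq2T, heq2 T' hT'm] at hadd2
      linarith
    -- s₁ < s₀
    have hs₁s₀ : s₁ < s₀ := by
      by_contra hcon
      push_neg at hcon
      have hnn : 0 ≤ ∫ x in s₀..s₁, 1 / (-f x) := by
        apply intervalIntegral.integral_nonneg hcon
        intro x hx
        have hfx : f x < 0 := hfneg x ⟨hs₀I.1.trans hx.1, hx.2.trans hs₁I.2⟩
          (lt_of_lt_of_le hξT.1 hx.1)
        have : (0:ℝ) < -f x := by linarith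
        positivity
      have hsymm : (∫ x in s₁..s₀, 1 / (-f x)) = -∫ x in s₀..s₁, 1 / (-f x) :=
        (intervalIntegral.integral_symm s₀ s₁)
      rw [hsymm] at hI2'
      have hpos : 0 < (1 - a) * (T' - T) := mul_pos (by linarith) hΔ
      linarith
    -- s₀ - s₁ ≤ u * ((1-a) * (T' - T))
    have hstep : s₀ - s₁ ≤ u * ((1 - a) * (T' - T)) := by
      have hmon := intervalIntegral.integral_mono_on (μ := volume) hs₁s₀.le
        intervalIntegrable_const (hnegf_int s₁ s₀ hs₁I hs₀I hs₁m.1 hξT.1)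
        (f := fun _ => 1 / u) (g := fun x => 1 / (-f x)) ?_
      · rw [hI2'] at hmon
        simp only [intervalIntegral.integral_const, smul_eq_mul] at hmon
        have := mul_le_mul_of_nonneg_right hmon hu.le
        calc s₀ - s₁ = (s₀ - s₁) * (1 / u) * u := by field_simp
        _ ≤ (1 - a) * (T' - T) * u := this
        _ = u * ((1 - a) * (T' - T)) := by ring
      · intro x hx
        have hx' : x ∈ Icc 0 θ := ⟨hs₁I.1.trans hx.1, hx.2.trans hs₀I.2⟩
        have hfx : f x < 0 := hfneg x hx' (lt_of_lt_of_le hs₁m.1 hx.1)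
        have hle : -f x ≤ u := by
          have := hmono hx' hs₀I hx.2
          simp only [hudef]; linarith
        exact one_div_le_one_div_of_le (by linarith) hle
    -- lower bounds for the denominators involving A T'
    have hposA' : ∀ x ∈ Icc 0 θ, ε₀ ≤ f x + A T' := by
      intro x hx
      have := hfθ_le x hx
      simp only [hε₀def] at hA'lo ⊢
      linarith
    have hposA₀' : ∀ x ∈ Icc 0 θ, ε₀ ≤ f x + A₀ := by
      intro x hx
      have := hfθ_le x hx
      simp only [hε₀def]; linarith
    -- the second-order integrand
    set hh : ℝ → ℝ := fun x => 1 / ((f x + A T') * (f x + A₀)) with hhdef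
    have hhc : ContinuousOn hh (Icc 0 θ) := by
      apply ContinuousOn.div continuousOn_const
        (((hfc.add continuousOn_const)).mul ((hfc.add continuousOn_const)))
      intro x hx
      have h1 := hposA' x hx
      have h2 := hposA₀' x hx
      exact (mul_pos (hε₀.trans_le h1) (hε₀.trans_le h2)).ne'
    have hh_int : ∀ p q : ℝ, p ∈ Icc 0 θ → q ∈ Icc 0 θ →
        IntervalIntegrable hh volume p q := fun p q hp hq =>
      (hhc.mono (uIcc_subset_Icc hp hq)).intervalIntegrable
    have hg'_int : ∀ p q : ℝ, p ∈ Icc 0 θ → q ∈ Icc 0 θ →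
        IntervalIntegrable (fun x => 1 / (f x + A T')) volume p q := by
      intro p q hp hq
      apply ContinuousOn.intervalIntegrable
      apply ContinuousOn.div continuousOn_const
        ((hfc.add continuousOn_const).mono (uIcc_subset_Icc hp hq))
      intro x hx
      have := hposA' x (uIcc_subset_Icc hp hq hx)
      exact (hε₀.trans_le this).ne'
    -- splitting identity for the A T' integrals
    have hsplit : ∀ p q : ℝ, p ∈ Icc 0 θ → q ∈ Icc 0 θ →
        (∫ x in p..q, 1 / (f x + A T'))
          = (∫ x in p..q, g x) + (A₀ - A T') * ∫ x in p..q, hh x := by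
      intro p q hp hq
      have hcongr : (∫ x in p..q, 1 / (f x + A T'))
          = ∫ x in p..q, (g x + (A₀ - A T') * hh x) := by
        apply intervalIntegral.integral_congr
        intro x hx
        have hx' : x ∈ Icc 0 θ := uIcc_subset_Icc hp hq hx
        have h1 : f x + A T' ≠ 0 := (hε₀.trans_le (hposA' x hx')).ne'
        have h2 : f x + A₀ ≠ 0 := (hposA₀ x hx').ne'
        simp only [hgdef, hhdef]
        field_simp
        ring
      rw [hcongr, intervalIntegral.integral_add (hg_int p q hp hq)
        (((hhc.mono (uIcc_subset_Icc hp hq)).intervalIntegrable).const_mul _),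
        intervalIntegral.integral_const_mul]
    -- additivity for g
    have haddg : (∫ x in s₁..s₀, g x) + (∫ x in s₀..θ, g x) = ∫ x in s₁..θ, g x :=
      intervalIntegral.integral_add_adjacent_intervals
        (hg_int s₁ s₀ hs₁I hs₀I) (hg_int s₀ θ hs₀I hθI)
    -- main balance equation
    set P : ℝ := (∫ x in s₁..θ, hh x) + (n:ℝ) * ∫ x in (0:ℝ)..θ, hh x with hPdef
    have hbal : a * (T' - T) = (∫ x in s₁..s₀, g x) + (A₀ - A T') * P := by
      have e1 : (∫ x in s₁..θ, 1 / (f x + A T'))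
          + (n:ℝ) * (∫ x in (0:ℝ)..θ, 1 / (f x + A T')) = a * T' := heq1 T' hT'm
      rw [hsplit s₁ θ hs₁I hθI, hsplit 0 θ (left_mem_Icc.mpr hθ.le) hθI] at e1
      have e0 : (∫ x in s₀..θ, g x) + (n:ℝ) * (∫ x in (0:ℝ)..θ, g x) = a * T := heq1T
      rw [hPdef]
      linear_combination e0 - e1 - haddg
    -- bound on ∫_{s₁}^{s₀} g
    have hgbound : (∫ x in s₁..s₀, g x) ≤ u * ((1 - a) * (T' - T)) * (1 / (A₀ - u)) := by
      have hmon := intervalIntegral.integral_mono_on (μ := volume) hs₁s₀.le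
        (hg_int s₁ s₀ hs₁I hs₀I) intervalIntegrable_const
        (f := g) (g := fun _ => 1 / (A₀ - u)) ?_
      · simp only [intervalIntegral.integral_const, smul_eq_mul] at hmon
        have h1 : (0:ℝ) ≤ 1 / (A₀ - u) := by positivity
        calc (∫ x in s₁..s₀, g x) ≤ (s₀ - s₁) * (1 / (A₀ - u)) := hmon
        _ ≤ u * ((1 - a) * (T' - T)) * (1 / (A₀ - u)) :=
            mul_le_mul_of_nonneg_right hstep h1
      · intro x hx
        have hx' : x ∈ Icc 0 θ := ⟨hs₁I.1.trans hx.1, hx.2.trans hs₀I.2⟩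
        have hle : A₀ - u ≤ f x + A₀ := by
          have := hmono hx' hs₀I hx.2
          simp only [hudef]; linarith
        simp only [hgdef]
        exact one_div_le_one_div_of_le hAmu hle
    -- bounds on P
    have hh_nonneg : ∀ x ∈ Icc 0 θ, 0 ≤ hh x := by
      intro x hx
      have h1 := hposA' x hx
      have h2 := hposA₀ x hx
      simp only [hhdef]
      have := mul_pos (hε₀.trans_le h1) h2
      positivity
    have hh_le : ∀ x ∈ Icc 0 θ, hh x ≤ 1 / ε₀ ^ 2 := by
      intro x hx
      have h1 := hposA' x hx
      have h2 := hposA₀' x hx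
      simp only [hhdef]
      apply one_div_le_one_div_of_le (by positivity)
      calc ε₀ ^ 2 = ε₀ * ε₀ := sq ε₀
      _ ≤ (f x + A T') * (f x + A₀) :=
          mul_le_mul h1 h2 hε₀.le (hε₀.le.trans h1)
    have hint_le : ∀ p : ℝ, p ∈ Icc 0 θ →
        (∫ x in p..θ, hh x) ≤ θ * (1 / ε₀ ^ 2) ∧ 0 ≤ ∫ x in p..θ, hh x := by
      intro p hp
      constructor
      · have hmon := intervalIntegral.integral_mono_on (μ := volume) hp.2
          (hh_int p θ hp hθI) intervalIntegrable_const
          (f := hh) (g := fun _ => 1 / ε₀ ^ 2)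
          (fun x hx => hh_le x ⟨hp.1.trans hx.1, hx.2⟩)
        simp only [intervalIntegral.integral_const, smul_eq_mul] at hmon
        calc (∫ x in p..θ, hh x) ≤ (θ - p) * (1 / ε₀ ^ 2) := hmon
        _ ≤ θ * (1 / ε₀ ^ 2) :=
            mul_le_mul_of_nonneg_right (by linarith [hp.1]) (by positivity)
      · exact intervalIntegral.integral_nonneg hp.2
          (fun x hx => hh_nonneg x ⟨hp.1.trans hx.1, hx.2⟩)
    have hPC : P ≤ C ∧ 0 ≤ P := by
      obtain ⟨hu1, hl1⟩ := hint_le s₁ hs₁I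
      obtain ⟨hu2, hl2⟩ := hint_le 0 (left_mem_Icc.mpr hθ.le)
      have hnn : (0:ℝ) ≤ (n:ℝ) := by positivity
      constructor
      · simp only [hPdef, hCdef]
        have := mul_le_mul_of_nonneg_left hu2 hnn
        have hC' : ((n:ℝ) + 1) * θ / ε₀ ^ 2 = θ * (1 / ε₀ ^ 2) + (n:ℝ) * (θ * (1 / ε₀ ^ 2)) := by
          field_simp; ring
        rw [hC']
        linarith
      · simp only [hPdef]
        have h := mul_nonneg hnn hl2
        linarith
    -- the key lower bound on (A₀ - A T') * P
    have hlow : c * (T' - T) ≤ (A₀ - A T') * P := by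
      have hkey2 : c * (T' - T) + u * ((1 - a) * (T' - T)) * (1 / (A₀ - u))
          = a * (T' - T) := by
        simp only [hcdef]
        field_simp
        ring
      have := hbal
      linarith [hgbound]
    -- conclude A₀ - A T' > 0 and the slope bound
    have hApos : 0 < A₀ - A T' := by
      by_contra hcon
      push_neg at hcon
      have h := mul_nonpos_of_nonpos_of_nonneg hcon hPC.2
      have h2 := mul_pos hc hΔ
      linarith only [h, h2, hlow]
    have hfinal : c * (T' - T) ≤ (A₀ - A T') * C := by
      calc c * (T' - T) ≤ (A₀ - A T') * P := hlow
      _ ≤ (A₀ - A T') * C := mul_le_mul_of_nonneg_left hPC.1 hApos.le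
    have hslope : (A T' - A T) / (T' - T) ≤ -(c / C) := by
      rw [div_le_iff₀ hΔ]
      have h1 : c / C * (T' - T) ≤ A₀ - A T' := by
        rw [div_mul_eq_mul_div, div_le_iff₀ hC]
        linarith [hfinal]
      simp only [hA₀def] at h1 ⊢
      linarith
    rw [slope_def_field]
    simpa [div_eq_inv_mul] using hslope
  -- conclude from the slope bound
  have htend : Tendsto (slope A T) (𝓝[>] T) (𝓝 (deriv A T)) :=
    (hasDerivAt_iff_tendsto_slope.mp (hA_diff T hTm).hasDerivAt).mono_left
      (nhdsWithin_mono T (fun x hx => ne_of_gt hx))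
  have hle : deriv A T ≤ -(c / C) := le_of_tendsto htend hev
  have : 0 < c / C := div_pos hc hC
  linarith
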